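/- Let n ≥ 6 be odd. Then the digraph 𝓛 is primitive and for every 1 ≤ k ≤ n its k-th smallest local exponent is attained at v_k and equals exp_𝓛(k) = exp_𝓛(v_k) = (n−1)(n−3) + k − 1. -/

import Mathlib

/-- `f : ℕ → V` traces a directed walk of length `t` in the digraph with
adjacency relation `A` if consecutive vertices are joined by arcs. -/
def IsWalk {V : Type*} (A : V → V → Prop) (t : ℕ) (f : ℕ → V) : Prop :=
  ∀ i < t, A (f i) (f (i + 1))

/-- There is a directed walk of length `t` from `u` to `v`. -/
def HasWalk {V : Type*} (A : V → V → Prop) (t : ℕ) (u v : V) : Prop :=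
  ∃ f : ℕ → V, f 0 = u ∧ f t = v ∧ IsWalk A t f

/-- A digraph is strongly connected if every vertex can reach every vertex. -/
def StronglyConnected {V : Type*} (A : V → V → Prop) : Prop :=
  ∀ u v : V, ∃ t : ℕ, HasWalk A t u v

/-- A digraph is primitive if it is strongly connected and for some `t > 0`
there are directed walks of length `t` between every ordered pair of vertices. -/
def IsPrimitive {V : Type*} (A : V → V → Prop) : Prop :=
  StronglyConnected A ∧ ∃ t : ℕ, 0 < t ∧ ∀ u v : V, HasWalk A t u v

/-- The local exponent at `u`: the least `l` such that for every `t ≥ l` and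
every vertex `v` there is a directed walk of length `t` from `u` to `v`. -/
noncomputable def localExp {V : Type*} (A : V → V → Prop) (u : V) : ℕ :=
  sInf {l : ℕ | ∀ t ≥ l, ∀ v : V, HasWalk A t u v}

/-- `kthSmallest f k` is the `k`-th smallest element (1-indexed) of the
multiset of values of `f`. -/
noncomputable def kthSmallest {n : ℕ} (f : Fin n → ℕ) (k : ℕ) : ℕ :=
  (Multiset.sort (Finset.univ.val.map f) (· ≤ ·)).getD (k - 1) 0

/-- A directed cycle of length `c` (a closed walk whose first `c` vertices are
pairwise distinct), given by its vertex function. -/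
def IsCycle {V : Type*} (A : V → V → Prop) (c : ℕ) (f : ℕ → V) : Prop :=
  IsWalk A c f ∧ f c = f 0 ∧ ∀ i < c, ∀ j < c, f i = f j → i = j

/-- A signed digraph: each arc carries a sign `+1` or `-1`. -/
structure SignedDigraph (V : Type*) where
  Adj : V → V → Prop
  sgn : V → V → ℤ
  sgn_unit : ∀ u v : V, Adj u v → sgn u v = 1 ∨ sgn u v = -1

namespace SignedDigraph

variable {V : Type*} (S : SignedDigraph V)

/-- The sign of the walk of length `t` traced by `f`. -/
def walkSign (t : ℕ) (f : ℕ → V) : ℤ :=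
  ∏ i ∈ Finset.range t, S.sgn (f i) (f (i + 1))

/-- There is a pair of SSSD walks of length `t` from `u` to `v`: two walks with
the same endpoints and the same length but different signs. -/
def HasSSSD (t : ℕ) (u v : V) : Prop :=
  ∃ f g : ℕ → V,
    (f 0 = u ∧ f t = v ∧ IsWalk S.Adj t f) ∧
    (g 0 = u ∧ g t = v ∧ IsWalk S.Adj t g) ∧
    S.walkSign t f ≠ S.walkSign t g

/-- A signed digraph is primitive and nonpowerful if from some length on there
are SSSD walk pairs between all ordered pairs of vertices. -/
def IsPrimitiveNonpowerful : Prop :=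
  ∃ l : ℕ, 0 < l ∧ ∀ t ≥ l, ∀ u v : V, S.HasSSSD t u v

/-- The local base at vertex `u`: the least `l` such that for every `t ≥ l` and
every vertex `v` there is a pair of SSSD walks of length `t` from `u` to `v`. -/
noncomputable def localBase (u : V) : ℕ :=
  sInf {l : ℕ | ∀ t ≥ l, ∀ v : V, S.HasSSSD t u v}

/-- All directed cycles of length `c` in `S` have the same sign. -/
def SameSignCycles (c : ℕ) : Prop :=
  ∀ f g : ℕ → V, IsCycle S.Adj c f → IsCycle S.Adj c g →
    S.walkSign c f = S.walkSign c g

end SignedDigraph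

/-- Isomorphism of digraphs. -/
def DigraphIso {V W : Type*} (A : V → V → Prop) (B : W → W → Prop) : Prop :=
  ∃ e : V ≃ W, ∀ u v : V, A u v ↔ B (e u) (e v)

/-- The Hamilton cycle `Cₙ` on `v₁,…,vₙ` (here `vⱼ` is the vertex with 0-based
index `j-1`), with arcs `v₁ → vₙ` and `vⱼ → v_{j-1}` for `2 ≤ j ≤ n`. -/
def CnAdj (n : ℕ) : Fin n → Fin n → Prop := fun a b =>
  (a.val = 0 ∧ b.val = n - 1) ∨ a.val = b.val + 1

/-- The digraph `D_{k,i}`: the Hamilton cycle `Cₙ` together with the arcs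
`vⱼ → v_{n-k+j-1}` for `1 ≤ j ≤ i`. -/
def DkiAdj (n k i : ℕ) : Fin n → Fin n → Prop := fun a b =>
  CnAdj n a b ∨ ∃ j : ℕ, 1 ≤ j ∧ j ≤ i ∧ a.val = j - 1 ∧ b.val = n - k + j - 2

/-- The digraph `𝓛`: `Cₙ` together with the arcs `v₁ → v_{n-2}` and `v₃ → vₙ`. -/
def LAdj (n : ℕ) : Fin n → Fin n → Prop := fun a b =>
  CnAdj n a b ∨ (a.val = 0 ∧ b.val = n - 3) ∨ (a.val = 2 ∧ b.val = n - 1)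

/-- The digraph `F`: the `(n-1)`-cycle `v₁ → vₙ → v_{n-1} → v_{n-3} → ⋯ → v₂ → v₁`
together with the arcs `v₁ → v_{n-2}` and `v_{n-2} → v_{n-3}`. -/
def FAdj (n : ℕ) : Fin n → Fin n → Prop := fun a b =>
  (a.val = 0 ∧ b.val = n - 1) ∨ (a.val = n - 1 ∧ b.val = n - 2) ∨
  (a.val = n - 2 ∧ b.val = n - 4) ∨ (a.val = b.val + 1 ∧ 1 ≤ a.val ∧ a.val ≤ n - 4) ∨
  (a.val = 0 ∧ b.val = n - 3) ∨ (a.val = n - 3 ∧ b.val = n - 4)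

/-- The digraph `F₁`: the `(n-1)`-cycle `v₁ → v_{n-1} → v_{n-2} → ⋯ → v₂ → v₁`
together with the arcs `v₁ → v_{n-2}`, `v₂ → vₙ` and `vₙ → v_{n-1}`. -/
def F1Adj (n : ℕ) : Fin n → Fin n → Prop := fun a b =>
  (a.val = 0 ∧ b.val = n - 2) ∨ (a.val = b.val + 1 ∧ 1 ≤ a.val ∧ a.val ≤ n - 2) ∨
  (a.val = 0 ∧ b.val = n - 3) ∨ (a.val = 1 ∧ b.val = n - 1) ∨ (a.val = n - 1 ∧ b.val = n - 2)

/-- The digraph `F₂`: the `(n-1)`-cycle `v₁ → vₙ → v_{n-2} → v_{n-3} → ⋯ → v₂ → v₁`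
together with the arcs `v₁ → v_{n-2}`, `vₙ → v_{n-1}` and `v_{n-1} → v_{n-3}`. -/
def F2Adj (n : ℕ) : Fin n → Fin n → Prop := fun a b =>
  (a.val = 0 ∧ b.val = n - 1) ∨ (a.val = n - 1 ∧ b.val = n - 3) ∨
  (a.val = b.val + 1 ∧ 1 ≤ a.val ∧ a.val ≤ n - 3) ∨
  (a.val = 0 ∧ b.val = n - 3) ∨ (a.val = n - 1 ∧ b.val = n - 2) ∨ (a.val = n - 2 ∧ b.val = n - 4)

/-- The digraph `F₃`: the `(n-2)`-cycle `v₁ → v_{n-2} → v_{n-3} → ⋯ → v₂ → v₁`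
together with the arcs `v₁ → v_{n-1}`, `v_{n-1} → v_{n-2}`, `v₁ → vₙ` and `vₙ → v_{n-2}`. -/
def F3Adj (n : ℕ) : Fin n → Fin n → Prop := fun a b =>
  (a.val = 0 ∧ b.val = n - 3) ∨ (a.val = b.val + 1 ∧ 1 ≤ a.val ∧ a.val ≤ n - 3) ∨
  (a.val = 0 ∧ b.val = n - 2) ∨ (a.val = n - 2 ∧ b.val = n - 3) ∨
  (a.val = 0 ∧ b.val = n - 1) ∨ (a.val = n - 1 ∧ b.val = n - 3)

/-- The digraph `F₇`: the `(n-1)`-cycle `v₁ → v_{n-1} → v_{n-2} → ⋯ → v₂ → v₁`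
together with the arcs `v₁ → v_{n-2}`, `v₃ → vₙ` and `vₙ → v_{n-1}`. -/
def F7Adj (n : ℕ) : Fin n → Fin n → Prop := fun a b =>
  (a.val = 0 ∧ b.val = n - 2) ∨ (a.val = b.val + 1 ∧ 1 ≤ a.val ∧ a.val ≤ n - 2) ∨
  (a.val = 0 ∧ b.val = n - 3) ∨ (a.val = 2 ∧ b.val = n - 1) ∨ (a.val = n - 1 ∧ b.val = n - 2)

/-- The digraph `F'ᵢ` (for `2 ≤ i ≤ n-3`): the `(n-1)`-cycle
`v₁ → v_{n-1} → v_{n-2} → ⋯ → v₂ → v₁` together with the arcs `v₁ → v_{n-2}`,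
`v_{i+1} → vₙ` and `vₙ → v_{i-1}`. -/
def FpAdj (n i : ℕ) : Fin n → Fin n → Prop := fun a b =>
  (a.val = 0 ∧ b.val = n - 2) ∨ (a.val = b.val + 1 ∧ 1 ≤ a.val ∧ a.val ≤ n - 2) ∨
  (a.val = 0 ∧ b.val = n - 3) ∨ (a.val = i ∧ b.val = n - 1) ∨ (a.val = n - 1 ∧ b.val = i - 2)

/-- The digraph `𝓑₁`: `Cₙ` together with the arcs `v₁ → v_{n-3}` and `v₃ → v_{n-1}`. -/
def B1Adj (n : ℕ) : Fin n → Fin n → Prop := fun a b =>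
  CnAdj n a b ∨ (a.val = 0 ∧ b.val = n - 4) ∨ (a.val = 2 ∧ b.val = n - 2)

/-- The digraph `𝓑₂`: `Cₙ` together with the arcs `v₁ → v_{n-3}` and `v₄ → vₙ`. -/
def B2Adj (n : ℕ) : Fin n → Fin n → Prop := fun a b =>
  CnAdj n a b ∨ (a.val = 0 ∧ b.val = n - 4) ∨ (a.val = 3 ∧ b.val = n - 1)

/-- The digraph `𝓑₃`: `Cₙ` together with the arcs `v₁ → v_{n-3}`, `v₂ → v_{n-2}`
and `v₄ → vₙ`. -/
def B3Adj (n : ℕ) : Fin n → Fin n → Prop := fun a b =>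
  CnAdj n a b ∨ (a.val = 0 ∧ b.val = n - 4) ∨ (a.val = 1 ∧ b.val = n - 3) ∨
  (a.val = 3 ∧ b.val = n - 1)

/-- The digraph `𝓑₄`: `Cₙ` together with the arcs `v₁ → v_{n-3}`, `v₃ → v_{n-1}`
and `v₄ → vₙ`. -/
def B4Adj (n : ℕ) : Fin n → Fin n → Prop := fun a b =>
  CnAdj n a b ∨ (a.val = 0 ∧ b.val = n - 4) ∨ (a.val = 2 ∧ b.val = n - 2) ∨
  (a.val = 3 ∧ b.val = n - 1)

namespace StmtAux

lemma hasWalk_refl {V : Type*} (A : V → V → Prop) (u : V) : HasWalk A 0 u u :=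
  ⟨fun _ => u, rfl, rfl, fun i hi => absurd hi (by omega)⟩

lemma hasWalk_single {V : Type*} {A : V → V → Prop} {u v : V} (h : A u v) :
    HasWalk A 1 u v := by
  refine ⟨fun i => if i = 0 then u else v, by simp, by simp, fun i hi => ?_⟩
  interval_cases i
  simpa using h

lemma hasWalk_trans {V : Type*} {A : V → V → Prop} {s t : ℕ} {u v w : V}
    (h1 : HasWalk A s u v) (h2 : HasWalk A t v w) : HasWalk A (s + t) u w := by
  obtain ⟨f, hf0, hfs, hf⟩ := h1
  obtain ⟨g, hg0, hgt, hg⟩ := h2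
  refine ⟨fun i => if i < s then f i else g (i - s), ?_, ?_, fun i hi => ?_⟩
  · by_cases h : 0 < s
    · simp [h, hf0]
    · have hs : s = 0 := by omega
      subst hs
      simp only [show ¬(0<0) from by omega, if_neg, Nat.sub_zero]
      rw [hg0, ← hfs, hf0]; simp
  · have : ¬ (s + t < s) := by omega
    simp [this, hgt]
  · by_cases h1 : i < s
    · by_cases h2 : i + 1 < s
      · simpa [h1, h2] using hf i h1
      · have he : i + 1 = s := by omega
        have : g (i + 1 - s) = f s := by simp [he, hg0, hfs]
        simp only [if_pos h1, if_neg h2, this, he ▸ hfs ▸ (hg0 ▸ rfl : g 0 = v)]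
        have := hf i h1
        simpa [he, hfs, hg0] using this
    · have h2 : ¬ (i + 1 < s) := by omega
      have : i + 1 - s = (i - s) + 1 := by omega
      simp only [if_neg h1, if_neg h2, this]
      exact hg (i - s) (by omega)

lemma hasWalk_len {V : Type*} {A : V → V → Prop} {s t : ℕ} {u v : V}
    (h : s = t) (hw : HasWalk A s u v) : HasWalk A t u v := h ▸ hw

variable {n : ℕ}

lemma arc_desc (hn : 7 ≤ n) {x : ℕ} (hx : x + 1 < n) :
    LAdj n ⟨x + 1, hx⟩ ⟨x, by omega⟩ := Or.inl (Or.inr rfl)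

lemma arc_0n1 (hn : 7 ≤ n) : LAdj n ⟨0, by omega⟩ ⟨n - 1, by omega⟩ :=
  Or.inl (Or.inl ⟨rfl, rfl⟩)

lemma arc_0n3 (hn : 7 ≤ n) : LAdj n ⟨0, by omega⟩ ⟨n - 3, by omega⟩ :=
  Or.inr (Or.inl ⟨rfl, rfl⟩)

lemma arc_2n1 (hn : 7 ≤ n) : LAdj n ⟨2, by omega⟩ ⟨n - 1, by omega⟩ :=
  Or.inr (Or.inr ⟨rfl, rfl⟩)

lemma walk_desc0 (hn : 7 ≤ n) (y d : ℕ) (h : y + d < n) :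
    HasWalk (LAdj n) d ⟨y + d, h⟩ ⟨y, by omega⟩ := by
  induction d with
  | zero => exact hasWalk_refl _ _
  | succ d ih =>
      have h1 : y + d < n := by omega
      have : HasWalk (LAdj n) (1 + d) ⟨y + (d+1), h⟩ ⟨y, by omega⟩ := by
        refine hasWalk_trans (hasWalk_single ?_) (ih h1)
        have he : (⟨y + (d + 1), h⟩ : Fin n) = ⟨(y + d) + 1, by omega⟩ := by
          apply Fin.ext; simp; omega
        rw [he]
        exact arc_desc hn (by omega)
      exact hasWalk_len (by omega) this

lemma walk_desc (hn : 7 ≤ n) {x y : ℕ} (hx : x < n) (hy : y ≤ x) :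
    HasWalk (LAdj n) (x - y) ⟨x, hx⟩ ⟨y, by omega⟩ := by
  have h2 : y + (x - y) < n := by omega
  have hw := walk_desc0 hn y (x - y) h2
  have he : (⟨y + (x - y), h2⟩ : Fin n) = ⟨x, hx⟩ := by apply Fin.ext; simp; omega
  rw [he] at hw
  exact hw

lemma walk_loop_short (hn : 7 ≤ n) :
    HasWalk (LAdj n) (n - 2) (⟨0, by omega⟩ : Fin n) ⟨0, by omega⟩ :=
  hasWalk_len (show 1 + (n - 3 - 0) = n - 2 by omega)
    (hasWalk_trans (hasWalk_single (arc_0n3 hn))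
      (walk_desc hn (x := n - 3) (y := 0) (by omega) (by omega)))

lemma walk_loop_long (hn : 7 ≤ n) :
    HasWalk (LAdj n) n (⟨0, by omega⟩ : Fin n) ⟨0, by omega⟩ :=
  hasWalk_len (show 1 + (n - 1 - 0) = n by omega)
    (hasWalk_trans (hasWalk_single (arc_0n1 hn))
      (walk_desc hn (x := n - 1) (y := 0) (by omega) (by omega)))

lemma walk_loops (hn : 7 ≤ n) (a b : ℕ) :
    HasWalk (LAdj n) (a * (n - 2) + b * n) (⟨0, by omega⟩ : Fin n) ⟨0, by omega⟩ := by
  induction a with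
  | zero =>
      simp only [Nat.zero_mul, Nat.zero_add]
      induction b with
      | zero => exact hasWalk_len (by omega) (hasWalk_refl (LAdj n) (⟨0, by omega⟩ : Fin n))
      | succ b ihb =>
          exact hasWalk_len (by ring) (hasWalk_trans ihb (walk_loop_long hn))
  | succ a iha =>
      exact hasWalk_len (by ring) (hasWalk_trans iha (walk_loop_short hn))

lemma walk_path1 (hn : 7 ≤ n) {w : ℕ} (h1 : 1 ≤ w) (h2 : w < n) :
    HasWalk (LAdj n) (n - w) (⟨0, by omega⟩ : Fin n) ⟨w, h2⟩ :=
  hasWalk_len (show 1 + (n - 1 - w) = n - w by omega)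
    (hasWalk_trans (hasWalk_single (arc_0n1 hn))
      (walk_desc hn (x := n - 1) (y := w) (by omega) (by omega)))

lemma walk_path2 (hn : 7 ≤ n) {w : ℕ} (h1 : 1 ≤ w) (h2 : w < n) :
    HasWalk (LAdj n) (2 * n - 4 - w) (⟨0, by omega⟩ : Fin n) ⟨w, h2⟩ :=
  hasWalk_len (show (1 + (n - 3 - 2)) + (1 + (n - 1 - w)) = 2 * n - 4 - w by omega)
    (hasWalk_trans
      (hasWalk_trans (hasWalk_single (arc_0n3 hn))
        (walk_desc hn (x := n - 3) (y := 2) (by omega) (by omega)))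
      (hasWalk_trans (hasWalk_single (arc_2n1 hn))
        (walk_desc hn (x := n - 1) (y := w) (by omega) (by omega))))

lemma rep_aux (hn : 7 ≤ n) (hodd : Odd n) (M : ℕ) :
    ∃ a k : ℕ, a < n ∧ M + 2 * a = n * k := by
  obtain ⟨m2, hm2⟩ := hodd
  have hdm := Nat.div_add_mod M n
  have e1 : n * (M / n + 1) = n * (M / n) + n := by ring
  have e2 : n * (M / n + 2) = n * (M / n) + n + n := by ring
  rcases Nat.eq_zero_or_pos (M % n) with h | h
  · exact ⟨0, M / n, by omega, by omega⟩
  · have hrn : M % n < n := Nat.mod_lt M (by omega)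
    set r := n - M % n with hr
    by_cases he : r % 2 = 0
    · exact ⟨r / 2, M / n + 1, by omega, by omega⟩
    · exact ⟨(r + n) / 2, M / n + 2, by omega, by omega⟩

lemma rep_ge (hn : 7 ≤ n) (hodd : Odd n) {N : ℕ} (hN : (n-1)*(n-3) ≤ N) :
    ∃ a b : ℕ, N = a * (n - 2) + b * n := by
  obtain ⟨a, k, ha, hk⟩ := rep_aux hn hodd N
  have hkz : (N : ℤ) + 2 * a = n * k := by exact_mod_cast hk
  have hNz : ((n:ℤ) - 1) * ((n:ℤ) - 3) ≤ N := by
    have h := hN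
    zify [show 1 ≤ n by omega, show 3 ≤ n by omega] at h
    exact h
  have hnz : (7 : ℤ) ≤ n := by exact_mod_cast hn
  have haz : (a : ℤ) ≤ (n : ℤ) - 1 := by omega
  have hak : a ≤ k := by
    by_contra hlt
    push_neg at hlt
    have hklt : (k : ℤ) ≤ (a : ℤ) - 1 := by omega
    have h1 : (n : ℤ) * k ≤ (n : ℤ) * ((a:ℤ) - 1) :=
      mul_le_mul_of_nonneg_left hklt (by linarith)
    have h2 : (a : ℤ) * ((n:ℤ) - 2) ≤ ((n:ℤ) - 1) * ((n:ℤ) - 2) :=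
      mul_le_mul_of_nonneg_right haz (by linarith)
    nlinarith
  refine ⟨a, k - a, ?_⟩
  have hgoal : (↑(a * (n - 2) + (k - a) * n) : ℤ) = (N : ℤ) := by
    push_cast [Nat.cast_sub (by omega : 2 ≤ n), Nat.cast_sub hak]
    linarith [hkz]
  exact_mod_cast hgoal.symm

lemma arith_main (hn : 7 ≤ n) (hodd : Odd n) {N w : ℕ} (hw1 : 1 ≤ w) (hw2 : w < n)
    (hN : (n-1)*(n-3) ≤ N) :
    ∃ a b : ℕ, N = a*(n-2) + b*n + (n - w) ∨ N = a*(n-2) + b*n + (2*n - 4 - w) := by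
  have hnN : n ≤ N := by
    have h1 : (n-1) * 2 ≤ (n-1)*(n-3) := Nat.mul_le_mul (le_refl (n-1)) (by omega)
    omega
  set M := N - (n - w) with hMdef
  have hMN : M + (n - w) = N := by omega
  obtain ⟨a, k, ha, hk⟩ := rep_aux hn hodd M
  have hkz : (M : ℤ) + 2 * a = n * k := by exact_mod_cast hk
  have hnz : (7 : ℤ) ≤ n := by exact_mod_cast hn
  have haz : (a : ℤ) ≤ (n : ℤ) - 1 := by omega
  have hNz : ((n:ℤ) - 1) * ((n:ℤ) - 3) ≤ N := by
    have h := hN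
    zify [show 1 ≤ n by omega, show 3 ≤ n by omega] at h
    exact h
  have hMz : (M : ℤ) = (N : ℤ) - ((n : ℤ) - (w : ℤ)) := by omega
  have hM4 : ((n:ℤ) - 1) * ((n:ℤ) - 4) ≤ (M : ℤ) := by
    have hw1z : (1:ℤ) ≤ (w:ℤ) := by omega
    nlinarith
  by_cases hak : a ≤ k
  · refine ⟨a, k - a, Or.inl ?_⟩
    have hgoal : (↑(a * (n - 2) + (k - a) * n + (n - w)) : ℤ) = (N : ℤ) := by
      push_cast [Nat.cast_sub (by omega : 2 ≤ n), Nat.cast_sub hak,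
        Nat.cast_sub (by omega : w ≤ n)]
      linarith [hkz, hMz]
    exact_mod_cast hgoal.symm
  · push_neg at hak
    have hk1 : a ≤ k + 1 := by
      by_contra hc
      push_neg at hc
      have hklt : (k : ℤ) ≤ (a : ℤ) - 2 := by omega
      have h1 : (n : ℤ) * k ≤ (n : ℤ) * ((a:ℤ) - 2) :=
        mul_le_mul_of_nonneg_left hklt (by linarith)
      have h2 : (a : ℤ) * ((n:ℤ) - 2) ≤ ((n:ℤ) - 1) * ((n:ℤ) - 2) :=
        mul_le_mul_of_nonneg_right haz (by linarith)
      nlinarith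
    have hka : a = k + 1 := by omega
    subst hka
    have hk0 : 1 ≤ k := by
      rcases Nat.eq_zero_or_pos k with h0 | h0
      · exfalso; rw [h0] at hk; omega
      · exact h0
    refine ⟨k - 1, 0, Or.inr ?_⟩
    have hgoal : (↑((k-1) * (n - 2) + 0 * n + (2*n - 4 - w)) : ℤ) = (N : ℤ) := by
      push_cast [Nat.cast_sub (by omega : 2 ≤ n), Nat.cast_sub hk0,
        Nat.cast_sub (by omega : 4 ≤ 2*n), Nat.cast_sub (by omega : w ≤ 2*n - 4)]
      linarith [hkz, hMz]
    exact_mod_cast hgoal.symm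

lemma upper (hn : 7 ≤ n) (hodd : Odd n) (u : Fin n) {t : ℕ}
    (ht : (n-1)*(n-3) + u.val ≤ t) (v : Fin n) : HasWalk (LAdj n) t u v := by
  have hu0 : HasWalk (LAdj n) u.val u (⟨0, by omega⟩ : Fin n) := by
    have hw := walk_desc hn (x := u.val) (y := 0) u.isLt (by omega)
    rw [Fin.eta] at hw
    exact hasWalk_len (by omega) hw
  have hN : (n-1)*(n-3) ≤ t - u.val := by omega
  rcases Nat.eq_zero_or_pos v.val with hv | hv
  · obtain ⟨a, b, hab⟩ := rep_ge hn hodd hN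
    have he : v = (⟨0, by omega⟩ : Fin n) := Fin.ext hv
    rw [he]
    refine hasWalk_len ?_ (hasWalk_trans hu0 (walk_loops hn a b))
    generalize hP : a * (n-2) + b * n = P at hab ⊢
    omega
  · obtain ⟨a, b, hab⟩ := arith_main hn hodd hv v.isLt hN
    rcases hab with h | h
    · have hp := walk_path1 hn hv v.isLt
      rw [Fin.eta] at hp
      refine hasWalk_len ?_ (hasWalk_trans hu0 (hasWalk_trans (walk_loops hn a b) hp))
      generalize hP : a * (n-2) + b * n = P at h ⊢
      omega
    · have hp := walk_path2 hn hv v.isLt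
      rw [Fin.eta] at hp
      refine hasWalk_len ?_ (hasWalk_trans hu0 (hasWalk_trans (walk_loops hn a b) hp))
      generalize hP : a * (n-2) + b * n = P at h ⊢
      omega

lemma invariant (hn : 7 ≤ n) {t : ℕ} (f : ℕ → Fin n) (hw : IsWalk (LAdj n) t f) :
    ∃ c : ℕ, (n-2) * c + (f 0).val ≤ t + (f t).val ∧
      ((f t).val + t + 2 * c) % n = (f 0).val % n := by
  induction t with
  | zero => exact ⟨0, by omega, by simp⟩
  | succ t ih =>
      obtain ⟨c, h1, h2⟩ := ih (fun i hi => hw i (by omega))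
      have harc := hw t (by omega)
      have hvt : (f t).val < n := (f t).isLt
      have hvt1 : (f (t+1)).val < n := (f (t+1)).isLt
      rcases harc with (⟨h0, he1⟩ | hsucc) | (⟨h0, he3⟩ | ⟨h02, he1⟩)
      · -- arc 0 → n-1
        refine ⟨c, ?_, ?_⟩
        · generalize hP : (n-2) * c = P at h1 ⊢; omega
        · have e2 : (f (t+1)).val + (t+1) + 2*c = ((f t).val + t + 2*c) + n := by omega
          rw [e2, Nat.add_mod_right]; exact h2
      · -- descent arc
        refine ⟨c, ?_, ?_⟩
        · generalize hP : (n-2) * c = P at h1 ⊢; omega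
        · have e2 : (f (t+1)).val + (t+1) + 2*c = ((f t).val + t + 2*c) := by omega
          rw [e2]; exact h2
      · -- chord 0 → n-3
        refine ⟨c + 1, ?_, ?_⟩
        · rw [show (n-2) * (c+1) = (n-2)*c + (n-2) from by ring]
          generalize hP : (n-2) * c = P at h1 ⊢; omega
        · have e2 : (f (t+1)).val + (t+1) + 2*(c+1) = ((f t).val + t + 2*c) + n := by omega
          rw [e2, Nat.add_mod_right]; exact h2
      · -- chord 2 → n-1
        refine ⟨c + 1, ?_, ?_⟩
        · rw [show (n-2) * (c+1) = (n-2)*c + (n-2) from by ring]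
          generalize hP : (n-2) * c = P at h1 ⊢; omega
        · have e2 : (f (t+1)).val + (t+1) + 2*(c+1) = ((f t).val + t + 2*c) + n := by omega
          rw [e2, Nat.add_mod_right]; exact h2

lemma lower (hn : 7 ≤ n) (hodd : Odd n) (u : Fin n) :
    ¬ HasWalk (LAdj n) ((n-1)*(n-3) + u.val - 1) u (⟨0, by omega⟩ : Fin n) := by
  rintro ⟨f, hf0, hft, hw⟩
  obtain ⟨c, h1, h2⟩ := invariant hn f hw
  rw [hf0] at h1 h2
  rw [hft] at h1 h2
  set E := (n-1)*(n-3) with hEdef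
  set t := E + u.val - 1 with hts
  have hnz : (7:ℤ) ≤ n := by exact_mod_cast hn
  have hEz : ((E : ℕ) : ℤ) = (n:ℤ)*(n:ℤ) - 4*(n:ℤ) + 3 := by
    rw [hEdef]
    push_cast [Nat.cast_sub (by omega : 1 ≤ n), Nat.cast_sub (by omega : 3 ≤ n)]
    ring
  have hE1 : 1 ≤ E := by
    have : (1:ℤ) ≤ ((E:ℕ) : ℤ) := by rw [hEz]; nlinarith
    exact_mod_cast this
  have htu : u.val ≤ 0 + t + 2*c := by omega
  have hme : Nat.ModEq n u.val ((⟨0, by omega⟩ : Fin n).val + t + 2 * c) := h2.symm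
  obtain ⟨j, hj⟩ := (Nat.modEq_iff_dvd' htu).mp hme
  have hjz : (0:ℤ) + t + 2*c - u.val = n * j := by
    zify [htu] at hj
    exact_mod_cast hj
  have htz : (t:ℤ) = ((E:ℕ):ℤ) + u.val - 1 := by
    have h : t + 1 = E + u.val := by omega
    omega
  have hdvd2 : (n : ℤ) ∣ 2*((c:ℤ)+1) :=
    ⟨(j:ℤ) + 4 - n, by rw [htz, hEz] at hjz; ring_nf; ring_nf at hjz; linarith [hjz]⟩
  have hdvd3 : n ∣ 2*(c+1) := by
    have : ((n:ℕ):ℤ) ∣ ((2*(c+1):ℕ):ℤ) := by push_cast; exact hdvd2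
    exact_mod_cast this
  have h2nd : ¬ (2 ∣ n) := by obtain ⟨m2, hm2⟩ := hodd; omega
  have hcop : Nat.Coprime n 2 := (Nat.Prime.coprime_iff_not_dvd Nat.prime_two |>.mpr h2nd).symm
  have hdvd4 : n ∣ (c+1) := Nat.Coprime.dvd_of_dvd_mul_left hcop hdvd3
  have hcn : n ≤ c + 1 := Nat.le_of_dvd (by omega) hdvd4
  have hmul : (n-2)*(n-1) ≤ (n-2)*c := Nat.mul_le_mul_left _ (by omega)
  have hBz : (((n-2)*(n-1):ℕ):ℤ) = (n:ℤ)*(n:ℤ) - 3*(n:ℤ) + 2 := by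
    push_cast [Nat.cast_sub (by omega : 2 ≤ n), Nat.cast_sub (by omega : 1 ≤ n)]
    ring
  have hfin : (((n-2)*(n-1):ℕ):ℤ) + u.val ≤ (t:ℤ) := by
    have hh : (n-2)*(n-1) + u.val ≤ t := by omega
    exact_mod_cast hh
  rw [hBz, htz, hEz] at hfin
  linarith

lemma localExp_eq (hn : 7 ≤ n) (hodd : Odd n) (u : Fin n) :
    localExp (LAdj n) u = (n-1)*(n-3) + u.val := by
  have hmem : ((n-1)*(n-3) + u.val) ∈ {l : ℕ | ∀ t ≥ l, ∀ v : Fin n, HasWalk (LAdj n) t u v} :=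
    fun t ht v => upper hn hodd u ht v
  refine le_antisymm (Nat.sInf_le hmem) ?_
  by_contra hlt
  push_neg at hlt
  have hIn := Nat.sInf_mem (⟨_, hmem⟩ : Set.Nonempty {l : ℕ | ∀ t ≥ l, ∀ v : Fin n, HasWalk (LAdj n) t u v})
  have hE1 : 0 < (n-1)*(n-3) := Nat.mul_pos (by omega) (by omega)
  have hw : HasWalk (LAdj n) ((n-1)*(n-3) + u.val - 1) u ⟨0, by omega⟩ := by
    refine hIn ((n-1)*(n-3) + u.val - 1) ?_ _
    have hlt' : sInf {l : ℕ | ∀ t ≥ l, ∀ v : Fin n, HasWalk (LAdj n) t u v}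
        < (n-1)*(n-3) + u.val := hlt
    generalize hC : (n-1)*(n-3) = C at hlt' hE1 ⊢
    omega
  exact lower hn hodd u hw

lemma sorted_list (C m : ℕ) : List.Pairwise (· ≤ ·) ((List.range m).map (fun i => C + i)) := by
  rw [List.pairwise_map]
  exact (List.pairwise_lt_range (n := m)).imp (by omega)

lemma kth_eq (hn : 7 ≤ n) (hodd : Odd n) (k : ℕ) (hk1 : 1 ≤ k) (hk2 : k ≤ n) :
    kthSmallest (localExp (LAdj n)) k = (n-1)*(n-3) + k - 1 := by
  have hloc : localExp (LAdj n) = fun u : Fin n => (n-1)*(n-3) + u.val :=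
    funext (localExp_eq hn hodd)
  rw [kthSmallest, hloc]
  have hms : Finset.univ.val.map (fun u : Fin n => (n-1)*(n-3) + u.val)
      = (((List.range n).map (fun i => (n-1)*(n-3) + i) : List ℕ) : Multiset ℕ) := by
    rw [Fin.univ_val_map, List.ofFn_eq_map]
    congr 1
    apply List.ext_getElem (by simp)
    intro i h1 h2
    simp
  rw [hms]
  have hs : Multiset.sort
        (((List.range n).map (fun i => (n-1)*(n-3) + i) : List ℕ) : Multiset ℕ) (· ≤ ·)
      = (List.range n).map (fun i => (n-1)*(n-3) + i) :=
    (Multiset.coe_eq_coe.mp (Multiset.sort_eq ..)).eq_of_pairwise'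
      (Multiset.pairwise_sort ..) (sorted_list _ _)
  rw [hs]
  rw [List.getD_eq_getElem _ _ (by simpa using by omega : k - 1 < ((List.range n).map (fun i => (n-1)*(n-3) + i)).length)]
  simp only [List.getElem_map, List.getElem_range]
  generalize (n-1)*(n-3) = C
  omega

lemma primitive (hn : 7 ≤ n) (hodd : Odd n) : IsPrimitive (LAdj n) := by
  constructor
  · exact fun u v => ⟨(n-1)*(n-3) + u.val, upper hn hodd u (le_refl _) v⟩
  · refine ⟨(n-1)*(n-3) + n, by omega, fun u v => upper hn hodd u ?_ v⟩
    have := u.isLt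
    generalize (n-1)*(n-3) = C at *
    omega

end StmtAux

/-- Let `n ≥ 6` be odd. Then the digraph `𝓛` is primitive and
for every `1 ≤ k ≤ n` its `k`-th smallest local exponent is attained at `v_k`
and equals `(n-1)(n-3) + k - 1`. -/
theorem stmt1 (n : ℕ) (hn : 6 ≤ n) (hodd : Odd n) :
    IsPrimitive (LAdj n) ∧
    ∀ k : ℕ, ∀ _hk1 : 1 ≤ k, ∀ _hk2 : k ≤ n,
      kthSmallest (localExp (LAdj n)) k = localExp (LAdj n) ⟨k - 1, by omega⟩ ∧
      localExp (LAdj n) ⟨k - 1, by omega⟩ = (n - 1) * (n - 3) + k - 1 := by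
  have h7 : 7 ≤ n := by obtain ⟨m, hm⟩ := hodd; omega
  refine ⟨StmtAux.primitive h7 hodd, fun k hk1 hk2 => ?_⟩
  have h2 : localExp (LAdj n) ⟨k - 1, by omega⟩ = (n - 1) * (n - 3) + k - 1 := by
    rw [StmtAux.localExp_eq h7 hodd]
    have hE1 : 0 < (n-1)*(n-3) := Nat.mul_pos (by omega) (by omega)
    simp only []
    generalize (n-1)*(n-3) = C at *
    omega
  exact ⟨(StmtAux.kth_eq h7 hodd k hk1 hk2).trans h2.symm, h2⟩
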